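/- The Adler–Yamilov map preserves the canonical Poisson structure on ℂ⁴: for all a, b ∈ ℂ and every point p = (x1,x2,y1,y2) ∈ ℂ⁴ with 1 + x1·y2 ≠ 0, the Jacobian matrix D of the map Y_{a,b} (viewed as a map ℂ⁴ → ℂ⁴ in the coordinates (x1,x2,y1,y2) ↦ (u1,u2,v1,v2)) satisfies D · J₂ · Dᵀ = J₂ at p, where J₂ = diag(K, K) and K = [[0,1],[-1,0]]. -/

import Mathlib

/-- The Adler–Yamilov map viewed as a map `ℂ⁴ → ℂ⁴` in the coordinates
`(x1,x2,y1,y2) ↦ (u1,u2,v1,v2)`. -/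
noncomputable def ayMap (a b : ℂ) (p : Fin 4 → ℂ) : Fin 4 → ℂ :=
  ![p 2 - ((a - b) / (1 + p 0 * p 3)) * p 0,
    p 3,
    p 0,
    p 1 + ((a - b) / (1 + p 0 * p 3)) * p 3]

/-- The Jacobian matrix of the Adler–Yamilov map at a point `p`. -/
noncomputable def ayJacobian (a b : ℂ) (p : Fin 4 → ℂ) : Matrix (Fin 4) (Fin 4) ℂ :=
  Matrix.of fun i j => deriv (fun t => ayMap a b (Function.update p j t) i) (p j)

/-- The canonical Poisson matrix `J₂ = diag(K, K)` with `K = [[0,1],[-1,0]]`. -/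
def J2 : Matrix (Fin 4) (Fin 4) ℂ :=
  !![0, 1, 0, 0; -1, 0, 0, 0; 0, 0, 0, 1; 0, 0, -1, 0]

private lemma hdC (c d x : ℂ) (h : 1 + x * d ≠ 0) :
    HasDerivAt (fun t => c / (1 + t * d)) (-(c * d) / (1 + x * d) ^ 2) x := by
  have h1 : HasDerivAt (fun t : ℂ => 1 + t * d) d x := by
    simpa using ((hasDerivAt_id x).mul_const d).const_add 1
  have h2 : HasDerivAt (fun t => c / (1 + t * d)) ((0 * (1 + x * d) - c * d) / (1 + x * d) ^ 2) x :=
    (hasDerivAt_const x c).div h1 h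
  convert h2 using 1
  ring

private lemma hdD (c e x : ℂ) (h : 1 + e * x ≠ 0) :
    HasDerivAt (fun t => c / (1 + e * t)) (-(c * e) / (1 + e * x) ^ 2) x := by
  have h1 : HasDerivAt (fun t : ℂ => 1 + e * t) e x := by
    simpa using ((hasDerivAt_id x).const_mul e).const_add 1
  have h2 : HasDerivAt (fun t => c / (1 + e * t)) ((0 * (1 + e * x) - c * e) / (1 + e * x) ^ 2) x :=
    (hasDerivAt_const x c).div h1 h
  convert h2 using 1
  ring

private lemma hdA (c d x : ℂ) (h : 1 + x * d ≠ 0) :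
    HasDerivAt (fun t => c / (1 + t * d) * t) (c / (1 + x * d) ^ 2) x := by
  have h2 : HasDerivAt (fun t => c / (1 + t * d) * t)
      (-(c * d) / (1 + x * d) ^ 2 * id x + c / (1 + x * d) * 1) x :=
    (hdC c d x h).mul (hasDerivAt_id x)
  convert h2 using 1
  simp only [id_eq]
  field_simp
  ring

private lemma hdB (c e x : ℂ) (h : 1 + e * x ≠ 0) :
    HasDerivAt (fun t => c / (1 + e * t) * t) (c / (1 + e * x) ^ 2) x := by
  have h2 : HasDerivAt (fun t => c / (1 + e * t) * t)
      (-(c * e) / (1 + e * x) ^ 2 * id x + c / (1 + e * x) * 1) x :=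
    (hdD c e x h).mul (hasDerivAt_id x)
  convert h2 using 1
  simp only [id_eq]
  field_simp
  ring

private lemma jac_eq (a b : ℂ) (p : Fin 4 → ℂ) (h : 1 + p 0 * p 3 ≠ 0) :
    ayJacobian a b p =
      !![-((a-b)/(1 + p 0 * p 3)^2), 0, 1, (a-b) * (p 0)^2 / (1 + p 0 * p 3)^2;
         0, 0, 0, 1;
         1, 0, 0, 0;
         -((a-b) * (p 3)^2 / (1 + p 0 * p 3)^2), 1, 0, (a-b)/(1 + p 0 * p 3)^2] := by
  ext i j
  fin_cases i <;> fin_cases j <;>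
    simp [ayJacobian, ayMap, Function.update_apply, Fin.ext_iff,
      show ((0:Fin 4):ℕ) = 0 from rfl, show ((1:Fin 4):ℕ) = 1 from rfl,
      show ((2:Fin 4):ℕ) = 2 from rfl, show ((3:Fin 4):ℕ) = 3 from rfl,
      Matrix.vecHead, Matrix.vecTail]
  · -- (0,0)
    rw [(hdA (a-b) (p 3) (p 0) h).deriv]
  · -- (0,3)
    rw [(hdD (a-b) (p 0) (p 3) h).deriv]
    field_simp
  · -- (3,0)
    rw [(hdC (a-b) (p 3) (p 0) h).deriv]
    field_simp
  · -- (3,3)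
    rw [(hdB (a-b) (p 0) (p 3) h).deriv]

private lemma gen_identity (u v w : ℂ) :
    !![-u, 0, 1, v; 0, 0, 0, 1; 1, 0, 0, 0; -w, 1, 0, u] * J2 *
      (!![-u, 0, 1, v; 0, 0, 0, 1; 1, 0, 0, 0; -w, 1, 0, u] : Matrix (Fin 4) (Fin 4) ℂ).transpose
      = J2 := by
  rw [show (!![-u, 0, 1, v; 0, 0, 0, 1; 1, 0, 0, 0; -w, 1, 0, u] :
      Matrix (Fin 4) (Fin 4) ℂ).transpose
      = !![-u, 0, 1, -w; 0, 0, 0, 1; 1, 0, 0, 0; v, 1, 0, u] from by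
    ext i j; fin_cases i <;> fin_cases j <;> rfl]
  ext i j
  fin_cases i <;> fin_cases j <;>
    simp [Matrix.mul_apply, Fin.sum_univ_four, J2, Matrix.vecHead, Matrix.vecTail]

/-- The Adler–Yamilov map preserves the canonical Poisson structure on `ℂ⁴`:
its Jacobian matrix `D` satisfies `D·J₂·Dᵀ = J₂` at every point of its domain. -/
theorem adler_yamilov_preserves_poisson (a b : ℂ) (p : Fin 4 → ℂ)
    (h : 1 + p 0 * p 3 ≠ 0) :
    ayJacobian a b p * J2 * (ayJacobian a b p).transpose = J2 := by
  rw [jac_eq a b p h]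
  exact gen_identity ((a-b)/(1 + p 0 * p 3)^2) ((a-b) * (p 0)^2 / (1 + p 0 * p 3)^2)
    ((a-b) * (p 3)^2 / (1 + p 0 * p 3)^2)
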